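/- If a path v in Q is obtained from a path u by a single one-step reduction, then ℘(v) ≤ ℘(u). Consequently, if v is obtained from u by any finite sequence of one-step reductions, then ℘(v) ≤ ℘(u); i.e., the turning number can only decrease monotonically under reduction. -/
import Mathlib


/-- The arrows of the KLRW quiver on vertices `{0, …, n}`:
`p i : i → i+1` and `q i : i+1 → i` (for `0 ≤ i < n`), and loops `s i : i → i`.
(Here `p i` stands for the paper's `p_{i+1}` and `q i` for `q_i`.) -/
inductive Arrow (n : ℕ) where
  | p (i : Fin n)
  | q (i : Fin n)
  | s (i : Fin (n + 1))
deriving DecidableEq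

/-- One-step reduction of words (in word order, leftmost = last applied): replace one
occurrence of a left-hand side of the reduction system `q_i p_{i+1} ⟶ s_i`,
`p_i q_{i−1} ⟶ s_i`, `s_i p_i ⟶ p_i s_{i−1}`, `s_i q_i ⟶ q_i s_{i+1}` by the
corresponding right-hand side. -/
inductive Step {n : ℕ} : List (Arrow n) → List (Arrow n) → Prop where
  | qp (L R : List (Arrow n)) (i : Fin n) :
      Step (L ++ [.q i, .p i] ++ R) (L ++ [.s i.castSucc] ++ R)
  | pq (L R : List (Arrow n)) (i : Fin n) :
      Step (L ++ [.p i, .q i] ++ R) (L ++ [.s i.succ] ++ R)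
  | sp (L R : List (Arrow n)) (i : Fin n) :
      Step (L ++ [.s i.succ, .p i] ++ R) (L ++ [.p i, .s i.castSucc] ++ R)
  | sq (L R : List (Arrow n)) (i : Fin n) :
      Step (L ++ [.s i.castSucc, .q i] ++ R) (L ++ [.q i, .s i.succ] ++ R)

/-- Direction of an arrow: `+1` for `p`, `−1` for `q`, `0` for the loops `s`. -/
def dir {n : ℕ} : Arrow n → ℤ
  | .p _ => 1
  | .q _ => -1
  | .s _ => 0

/-- Number of sign changes in a list of integers (adjacent pairs with negative product). -/
def signChanges : List ℤ → ℕ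
  | a :: b :: l => (if a * b < 0 then 1 else 0) + signChanges (b :: l)
  | _ => 0

/-- The turning number `℘(u)` of a word: the number of sign changes in the subsequence of
nonzero directions of its arrows. -/
def turns {n : ℕ} (u : List (Arrow n)) : ℕ :=
  signChanges ((u.map dir).filter fun d => d ≠ 0)
lemma sc_cons_le (a : ℤ) (l : List ℤ) : signChanges l ≤ signChanges (a :: l) := by
  cases l with
  | nil => simp [signChanges]
  | cons b t => simp [signChanges]

lemma key (x y : ℤ) (h : x * y < 0) :
    ∀ A B : List ℤ, signChanges (A ++ B) ≤ signChanges (A ++ x :: y :: B) := by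
  intro A
  induction A with
  | nil =>
    intro B
    simp only [List.nil_append, signChanges, if_pos h]
    have := sc_cons_le y B
    omega
  | cons a A' ih =>
    intro B
    cases A' with
    | nil =>
      cases B with
      | nil => simp [signChanges, if_pos h]
      | cons b B' =>
        simp only [List.cons_append, List.nil_append, signChanges, if_pos h]
        have := sc_cons_le y (b :: B')
        split_ifs <;> simp_all [signChanges] <;> omega
    | cons a' A'' =>
      have := ih B
      simp only [List.cons_append, signChanges, List.append_eq] at *
      omega

lemma step_le {n : ℕ} (u v : List (Arrow n)) (h : Step u v) : turns v ≤ turns u := by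
  cases h with
  | qp L R i =>
    simp only [turns, List.map_append, List.filter_append, List.map_cons, List.map_nil, dir,
      List.filter, List.append_assoc]
    simpa using key (-1) 1 (by norm_num) ((L.map dir).filter fun d => d ≠ 0)
      ((R.map dir).filter fun d => d ≠ 0)
  | pq L R i =>
    simp only [turns, List.map_append, List.filter_append, List.map_cons, List.map_nil, dir,
      List.filter, List.append_assoc]
    simpa using key 1 (-1) (by norm_num) ((L.map dir).filter fun d => d ≠ 0)
      ((R.map dir).filter fun d => d ≠ 0)
  | sp L R i =>
    simp [turns, List.map_append, List.filter_append, dir, List.filter]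
  | sq L R i =>
    simp [turns, List.map_append, List.filter_append, dir, List.filter]

/-- The turning number can only decrease under one-step reductions, hence also under any
finite sequence of one-step reductions. -/
theorem turns_antitone_under_reduction (n : ℕ) :
    (∀ u v : List (Arrow n), Step u v → turns v ≤ turns u) ∧
    (∀ u v : List (Arrow n), Relation.ReflTransGen Step u v → turns v ≤ turns u) := by
  refine ⟨step_le, fun u v h => ?_⟩
  induction h with
  | refl => exact le_refl _
  | tail _ hstep ih => exact le_trans (step_le _ _ hstep) ih
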